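/- Let H : Ω → ℝ be a continuous nonnegative function (a contingent claim) and h ≥ 0. Then h is a no-arbitrage price for H — that is, the extended market with D+2 assets obtained by adjoining the asset with price f_{D+1} = h and payoff S_{D+1} = H is arbitrage-free — if and only if there exists a full support martingale measure P for the original market (f, S) under which H is integrable and h = ∫ H dP. -/

import Mathlib

open MeasureTheory Filter Topology

variable {Ω : Type*}

section Defs

variable [TopologicalSpace Ω] [MeasurableSpace Ω]

/-- A portfolio `π` is an arbitrage for the market `(f, S)`:
nonpositive cost, nonnegative payoff everywhere, strictly positive payoff somewhere. -/
def IsArbitrage {D : ℕ} (f : Fin (D + 1) → ℝ) (S : Fin (D + 1) → C(Ω, ℝ))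
    (π : Fin (D + 1) → ℝ) : Prop :=
  (∑ d, π d * f d) ≤ 0 ∧ (∀ ω : Ω, 0 ≤ ∑ d, π d * S d ω) ∧ (∃ ω : Ω, 0 < ∑ d, π d * S d ω)

/-- The market `(f, S)` is arbitrage-free. -/
def ArbitrageFree {D : ℕ} (f : Fin (D + 1) → ℝ) (S : Fin (D + 1) → C(Ω, ℝ)) : Prop :=
  ¬ ∃ π : Fin (D + 1) → ℝ, IsArbitrage f S π

/-- A measure has full support: every nonempty open set has positive measure. -/
def HasFullSupport (P : Measure Ω) : Prop :=
  ∀ U : Set Ω, IsOpen U → U.Nonempty → 0 < P U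

/-- A martingale measure for the market `(f, S)`: a Borel probability measure under which
every asset payoff is integrable with expectation equal to its time-0 price. -/
def IsMartingaleMeasure {D : ℕ} (f : Fin (D + 1) → ℝ) (S : Fin (D + 1) → C(Ω, ℝ))
    (P : Measure Ω) : Prop :=
  IsProbabilityMeasure P ∧ ∀ d, Integrable (S d) P ∧ (∫ ω, S d ω ∂P) = f d

/-- A portfolio `π` is a superhedge for the claim `H`. -/
def IsSuperhedge {D : ℕ} (S : Fin (D + 1) → C(Ω, ℝ)) (H : C(Ω, ℝ))
    (π : Fin (D + 1) → ℝ) : Prop :=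
  ∀ ω : Ω, H ω ≤ ∑ d, π d * S d ω

/-- A portfolio `π` is a subhedge for the claim `H`. -/
def IsSubhedge {D : ℕ} (S : Fin (D + 1) → C(Ω, ℝ)) (H : C(Ω, ℝ))
    (π : Fin (D + 1) → ℝ) : Prop :=
  ∀ ω : Ω, (∑ d, π d * S d ω) ≤ H ω

end Defs

set_option maxHeartbeats 1000000

section Helpers

lemma linfun_sum {k : ℕ} (ψ : (Fin k → ℝ) →ₗ[ℝ] ℝ) (v : Fin k → ℝ) :
    ψ v = ∑ d, v d * ψ (fun j => if d = j then 1 else 0) := by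
  conv_lhs => rw [pi_eq_sum_univ v]
  rw [map_sum]
  refine Finset.sum_congr rfl fun d _ => ?_
  rw [_root_.map_smul, smul_eq_mul]

lemma integrable_cont_dirac {Ω : Type*} [TopologicalSpace Ω] [MeasurableSpace Ω]
    [OpensMeasurableSpace Ω] (φ : C(Ω, ℝ)) (a : Ω) :
    Integrable (⇑φ) (Measure.dirac a) := by
  refine ⟨φ.continuous.aestronglyMeasurable, ?_⟩
  have hm : Measurable fun ω => (‖φ ω‖₊ : ENNReal) :=
    φ.continuous.measurable.nnnorm.coe_nnreal_ennreal
  show (∫⁻ ω, (‖φ ω‖₊ : ENNReal) ∂Measure.dirac a) < ⊤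
  rw [lintegral_dirac' a hm]
  exact ENNReal.coe_lt_top

lemma finsum_dirac_helper {Ω : Type*} [TopologicalSpace Ω] [MeasurableSpace Ω]
    [OpensMeasurableSpace Ω] [MeasurableSingletonClass Ω]
    (φ : C(Ω, ℝ)) {ι : Type} (t : Finset ι) (b : ι → ℝ) (hb : ∀ i ∈ t, 0 ≤ b i) (x : ι → Ω) :
    Integrable (⇑φ) (∑ i ∈ t, ENNReal.ofReal (b i) • Measure.dirac (x i)) ∧
      ∫ ω, φ ω ∂(∑ i ∈ t, ENNReal.ofReal (b i) • Measure.dirac (x i))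
        = ∑ i ∈ t, b i * φ (x i) := by
  have h1 : ∀ i ∈ t, Integrable (⇑φ) (ENNReal.ofReal (b i) • Measure.dirac (x i)) := fun i _ =>
    (integrable_cont_dirac φ (x i)).smul_measure ENNReal.ofReal_lt_top.ne
  refine ⟨integrable_finset_sum_measure.2 h1, ?_⟩
  rw [integral_finset_sum_measure h1]
  refine Finset.sum_congr rfl fun i hi => ?_
  rw [integral_smul_measure, integral_dirac, ENNReal.toReal_ofReal (hb i hi), smul_eq_mul]

lemma sum_dirac_helper {Ω : Type*} [TopologicalSpace Ω] [MeasurableSpace Ω]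
    [OpensMeasurableSpace Ω] [MeasurableSingletonClass Ω]
    (φ : C(Ω, ℝ)) (hφ : ∀ ω, 0 ≤ φ ω) (x : ℕ → Ω) (b : ℕ → ℝ) (hb : ∀ n, 0 ≤ b n)
    (hsum : Summable fun n => b n * φ (x n)) :
    Integrable (⇑φ) (Measure.sum fun n => ENNReal.ofReal (b n) • Measure.dirac (x n)) ∧
      ∫ ω, φ ω ∂(Measure.sum fun n => ENNReal.ofReal (b n) • Measure.dirac (x n))
        = ∑' n, b n * φ (x n) := by
  have hm : Measurable fun ω => (‖φ ω‖₊ : ENNReal) :=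
    φ.continuous.measurable.nnnorm.coe_nnreal_ennreal
  have heq : ∀ n, ∫⁻ ω, (‖φ ω‖₊ : ENNReal) ∂(ENNReal.ofReal (b n) • Measure.dirac (x n))
      = ENNReal.ofReal (b n * φ (x n)) := by
    intro n
    rw [lintegral_smul_measure, lintegral_dirac' _ hm, ENNReal.ofReal_mul (hb n)]
    congr 1
    rw [← enorm_eq_nnnorm, ← ofReal_norm, Real.norm_of_nonneg (hφ _)]
  have hint : Integrable (⇑φ) (Measure.sum fun n => ENNReal.ofReal (b n) • Measure.dirac (x n)) := by
    refine ⟨φ.continuous.aestronglyMeasurable, ?_⟩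
    show (∫⁻ ω, (‖φ ω‖₊ : ENNReal)
        ∂(Measure.sum fun n => ENNReal.ofReal (b n) • Measure.dirac (x n))) < ⊤
    rw [lintegral_sum_measure]
    have : ∑' n, ∫⁻ ω, (‖φ ω‖₊ : ENNReal) ∂(ENNReal.ofReal (b n) • Measure.dirac (x n))
        = ENNReal.ofReal (∑' n, b n * φ (x n)) := by
      rw [ENNReal.ofReal_tsum_of_nonneg (fun n => mul_nonneg (hb n) (hφ _)) hsum]
      exact tsum_congr heq
    rw [this]
    exact ENNReal.ofReal_lt_top
  refine ⟨hint, ?_⟩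
  rw [integral_sum_measure hint]
  refine tsum_congr fun n => ?_
  rw [integral_smul_measure, integral_dirac, ENNReal.toReal_ofReal (hb n), smul_eq_mul]

end Helpers

/-- Proper separation, by induction on dimension. -/
lemma sep_aux : ∀ (n : ℕ) (E : Type) [NormedAddCommGroup E] [NormedSpace ℝ E]
    [FiniteDimensional ℝ E], Module.finrank ℝ E ≤ n → ∀ (s : Set E) (x : E),
    (¬ ∀ g ∈ closure (convexHull ℝ s), ∃ t : ℝ, 0 < t ∧ x + t • (x - g) ∈ convexHull ℝ s) →
    ∃ ψ : E →ₗ[ℝ] ℝ, (∀ y ∈ s, ψ x ≤ ψ y) ∧ ∃ y₀ ∈ s, ψ x < ψ y₀ := by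
  intro n
  induction n using Nat.strong_induction_on with
  | _ n IH =>
  intro E _ _ _ hrank s x hG
  push_neg at hG
  obtain ⟨g, hg, hgt⟩ := hG
  set C := convexHull ℝ s with hC
  have hCconv : Convex ℝ C := convex_convexHull ℝ s
  have hs_ne : s.Nonempty := by
    rcases s.eq_empty_or_nonempty with rfl | h
    · simp [hC] at hg
    · exact h
  by_cases hx : x ∈ closure C
  · -- x in the closure
    -- the subspace spanned by differences
    set V : Submodule ℝ E := Submodule.span ℝ ((fun y => y - x) '' s) with hV
    have hsV : ∀ y ∈ s, y - x ∈ V := fun y hy => Submodule.subset_span ⟨y, hy, rfl⟩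
    have hA_convex : Convex ℝ {z : E | z - x ∈ V} := by
      intro z hz w hw a b ha hb hab
      have h1 : a • z + b • w - x = a • (z - x) + b • (w - x) := by
        have hx1 : (x : E) = a • x + b • x := by rw [← add_smul, hab, one_smul]
        calc a • z + b • w - x = a • z + b • w - (a • x + b • x) := by rw [← hx1]
          _ = a • (z - x) + b • (w - x) := by rw [smul_sub, smul_sub]; abel
      simp only [Set.mem_setOf_eq, h1]
      exact V.add_mem (V.smul_mem _ hz) (V.smul_mem _ hw)
    have hA_closed : IsClosed {z : E | z - x ∈ V} :=
      (Submodule.closed_of_finiteDimensional V).preimage (continuous_id.sub continuous_const)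
    have hCA : C ⊆ {z : E | z - x ∈ V} := convexHull_min hsV hA_convex
    have hgV : g - x ∈ V := closure_minimal hCA hA_closed hg
    by_cases hVtop : V = ⊤
    · -- full-dimensional case
      have hclosed : IsClosed (affineSpan ℝ s : Set E) :=
        (affineSpan ℝ s).closed_of_finiteDimensional
      have hCspan : C ⊆ (affineSpan ℝ s : Set E) := convexHull_subset_affineSpan s
      have hxspan : x ∈ affineSpan ℝ s := closure_minimal hCspan hclosed hx
      have hspan : affineSpan ℝ s = ⊤ := by
        rw [eq_top_iff]
        intro y _
        have hyV : y - x ∈ V := hVtop ▸ Submodule.mem_top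
        have hdir : V ≤ (affineSpan ℝ s).direction := by
          rw [hV, Submodule.span_le]
          rintro _ ⟨z, hz, rfl⟩
          exact AffineSubspace.vsub_mem_direction (subset_affineSpan ℝ s hz) hxspan
        have : y - x ∈ (affineSpan ℝ s).direction := hdir hyV
        simpa using AffineSubspace.vadd_mem_of_mem_direction this hxspan
      have hint : (interior C).Nonempty :=
        interior_convexHull_nonempty_iff_affineSpan_eq_top.mpr hspan
      have hxint : x ∉ interior C := by
        intro hxi
        have hcont : Continuous (fun t : ℝ => x + t • (x - g)) :=
          continuous_const.add (continuous_id.smul continuous_const)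
        have htend : Filter.Tendsto (fun t : ℝ => x + t • (x - g)) (𝓝[>] 0) (𝓝 x) := by
          have h := hcont.tendsto 0
          simp only [zero_smul, add_zero] at h
          exact h.mono_left nhdsWithin_le_nhds
        have hev := htend.eventually (isOpen_interior.eventually_mem hxi)
        obtain ⟨t, htC, ht0⟩ := (hev.and self_mem_nhdsWithin).exists
        exact hgt t ht0 (interior_subset htC)
      obtain ⟨φ, u, hlt, hge⟩ := geometric_hahn_banach_open hCconv.interior isOpen_interior
        (convex_singleton x) (Set.disjoint_singleton_right.mpr hxint)
      have hgex : u ≤ φ x := hge x rfl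
      obtain ⟨a, ha⟩ := hint
      have hle : ∀ y ∈ C, φ y ≤ u := by
        intro y hy
        have key : ∀ t : ℝ, t ∈ Set.Ioc (0:ℝ) 1 → φ (y + t • (a - y)) < u := fun t ht =>
          hlt _ (hCconv.add_smul_sub_mem_interior hy ha ht)
        have tend : Filter.Tendsto (fun t : ℝ => φ (y + t • (a - y))) (𝓝[>] 0) (𝓝 (φ y)) := by
          have hcont : Continuous (fun t : ℝ => φ (y + t • (a - y))) :=
            φ.continuous.comp (continuous_const.add (continuous_id.smul continuous_const))
          have h := hcont.tendsto 0
          simp only [zero_smul, add_zero] at h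
          exact h.mono_left nhdsWithin_le_nhds
        refine le_of_tendsto tend ?_
        filter_upwards [Ioc_mem_nhdsGT (by norm_num :
          (0:ℝ) < 1)] with t ht using (key t ht).le
      have hstrict : ∃ y₀ ∈ s, φ y₀ < φ x := by
        by_contra hcon
        push_neg at hcon
        have heq : ∀ y ∈ s, φ y = u := by
          intro y hy
          have h1 : φ y ≤ u := hle y (subset_convexHull ℝ s hy)
          have h2 : u ≤ φ y := le_trans hgex (hcon y hy)
          linarith
        have hCeq : C ⊆ {z : E | φ z = u} := by
          apply convexHull_min (fun y hy => heq y hy)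
          have : Convex ℝ (φ ⁻¹' {u}) := (convex_singleton u).linear_preimage
            (φ : E →ₗ[ℝ] ℝ)
          exact this
        have := hlt a ha
        have := hCeq (interior_subset ha)
        simp only [Set.mem_setOf_eq] at this
        linarith
      obtain ⟨y₀, hy₀s, hy₀⟩ := hstrict
      refine ⟨-φ.toLinearMap, fun y hy => ?_, y₀, hy₀s, by simpa using hy₀⟩
      have : φ y ≤ u := hle y (subset_convexHull ℝ s hy)
      simp only [LinearMap.neg_apply, ContinuousLinearMap.coe_coe, neg_le_neg_iff]
      linarith
    · -- proper subspace case: recurse in V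
      have hrankW : Module.finrank ℝ V < n :=
        lt_of_lt_of_le (Submodule.finrank_lt hVtop) hrank
      set σ : Set V := {w : V | (w : E) + x ∈ s} with hσ
      have hcoeσ : Subtype.val '' σ = (fun y => y - x) '' s := by
        apply Set.Subset.antisymm
        · rintro _ ⟨w, hw, rfl⟩
          exact ⟨(w : E) + x, hw, add_sub_cancel_right _ _⟩
        · rintro _ ⟨y, hy, rfl⟩
          refine ⟨⟨y - x, hsV y hy⟩, ?_, rfl⟩
          show y - x + x ∈ s
          rwa [sub_add_cancel]
      -- the translated hull
      have htrans : (fun y : E => y - x) '' C = convexHull ℝ ((fun y : E => y - x) '' s) := by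
        have hfun : (fun y : E => y - x) = ⇑((AffineEquiv.constVAdd ℝ E (-x)).toAffineMap) := by
          funext y
          simp [vadd_eq_add, sub_eq_neg_add]
        rw [hfun]
        exact AffineMap.image_convexHull _ s
      have hhull : (Subtype.val '' (convexHull ℝ σ) : Set E) = (fun y : E => y - x) '' C := by
        have h1 : (V.subtype : V → E) '' (convexHull ℝ σ)
            = convexHull ℝ ((V.subtype : V → E) '' σ) := V.subtype.image_convexHull σ
        simp only [Submodule.coe_subtype] at h1
        rw [h1, hcoeσ, htrans]
      have hmem_iff : ∀ w : V, w ∈ convexHull ℝ σ ↔ ((w : E) + x) ∈ C := by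
        intro w
        constructor
        · intro hw
          have hmem : (w : E) ∈ Subtype.val '' (convexHull ℝ σ) := ⟨w, hw, rfl⟩
          rw [hhull] at hmem
          obtain ⟨z, hz, hze⟩ := hmem
          have hzw : z = (w : E) + x := by rw [← hze, sub_add_cancel]
          rwa [← hzw]
        · intro hw
          have hmem : ((w : E) + x) - x ∈ (fun y : E => y - x) '' C := ⟨_, hw, rfl⟩
          rw [← hhull] at hmem
          obtain ⟨w', hw', hwe⟩ := hmem
          have hww : w' = w := Subtype.ext (by rw [hwe, add_sub_cancel_right])
          rwa [← hww]
      have hclosedemb : IsClosedEmbedding (Subtype.val : V → E) :=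
        (Submodule.closed_of_finiteDimensional V).isClosedEmbedding_subtypeVal
      have hgh : (⟨g - x, hgV⟩ : V) ∈ closure (convexHull ℝ σ) := by
        have h2 : closure ((fun y : E => y - x) '' C) = (fun y : E => y - x) '' closure C := by
          have := (Homeomorph.subRight x).image_closure C
          simpa using this.symm
        have hgmem : g - x ∈ closure ((fun y : E => y - x) '' C) := by
          rw [h2]; exact ⟨g, hg, rfl⟩
        rw [← hhull, hclosedemb.closure_image_eq] at hgmem
        obtain ⟨w, hw, hwe⟩ := hgmem
        have hww : w = ⟨g - x, hgV⟩ := Subtype.ext hwe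
        rwa [← hww]
      have hGV : ¬ ∀ g' ∈ closure (convexHull ℝ σ),
          ∃ t : ℝ, 0 < t ∧ (0 : V) + t • ((0 : V) - g') ∈ convexHull ℝ σ := by
        intro hall
        obtain ⟨t, ht, htmem⟩ := hall _ hgh
        have hmem := (hmem_iff _).mp htmem
        apply hgt t ht
        have hval : (((0 : V) + t • ((0 : V) - ⟨g - x, hgV⟩) : V) : E) = t • (x - g) := by
          push_cast
          rw [zero_add, zero_sub, smul_neg, smul_sub, smul_sub, neg_sub]
        rw [hval] at hmem
        rwa [add_comm] at hmem
      obtain ⟨ψ', hψ1, y₀', hy₀', hψ2⟩ :=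
        IH (Module.finrank ℝ V) hrankW V le_rfl σ 0 hGV
      simp only [map_zero] at hψ1 hψ2
      obtain ⟨q, hq⟩ := Submodule.exists_isCompl V
      set pr := Submodule.linearProjOfIsCompl V q hq with hpr
      have key : ∀ (z : E) (hz : z ∈ V), (ψ'.comp pr) z = ψ' ⟨z, hz⟩ := by
        intro z hz
        have h3 : pr z = ⟨z, hz⟩ := Submodule.linearProjOfIsCompl_apply_left hq ⟨z, hz⟩
        simp [LinearMap.comp_apply, h3]
      refine ⟨ψ'.comp pr, ?_, (y₀' : E) + x, hy₀', ?_⟩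
      · intro y hy
        have h1 : (ψ'.comp pr) y - (ψ'.comp pr) x = (ψ'.comp pr) (y - x) := (map_sub _ _ _).symm
        have h2 : (ψ'.comp pr) (y - x) = ψ' ⟨y - x, hsV y hy⟩ := key _ _
        have h3 : (0 : ℝ) ≤ ψ' ⟨y - x, hsV y hy⟩ := by
          refine hψ1 ⟨y - x, hsV y hy⟩ ?_
          show y - x + x ∈ s
          rwa [sub_add_cancel]
        linarith [h1 ▸ (h2 ▸ h3)]
      · have h1 : (ψ'.comp pr) ((y₀' : E) + x) - (ψ'.comp pr) x = (ψ'.comp pr) (y₀' : E) := by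
          rw [← map_sub, add_sub_cancel_right]
        have h2 : (ψ'.comp pr) (y₀' : E) = ψ' y₀' := by
          have := key (y₀' : E) y₀'.2
          simpa using this
        have h3 : (0 : ℝ) < ψ' y₀' := hψ2
        linarith [h1, h2]
  · -- x outside the closure: strict separation
    obtain ⟨φ, u, hxu, hu⟩ := geometric_hahn_banach_point_closed hCconv.closure
      isClosed_closure hx
    obtain ⟨y₀, hy₀⟩ := hs_ne
    have hy : ∀ y ∈ s, u < φ y := fun y hy =>
      hu y (subset_closure (subset_convexHull ℝ s hy))
    exact ⟨φ.toLinearMap, fun y hys => by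
      have := hy y hys; simp only [ContinuousLinearMap.coe_coe]; linarith,
      y₀, hy₀, by have := hy y₀ hy₀; simpa using by linarith⟩



/-- `h` is a no-arbitrage price for the claim `H` (the extended market with the
additional asset `(h, H)` is arbitrage-free) iff `h = ∫ H dP` for some full support
martingale measure `P` of the original market making `H` integrable. -/
theorem noArbitragePrice_iff_fullSupportMartingaleMeasure
    [MetricSpace Ω] [Nonempty Ω] [TopologicalSpace.SeparableSpace Ω] [CompleteSpace Ω]
    [MeasurableSpace Ω] [BorelSpace Ω] {D : ℕ} (f : Fin (D + 1) → ℝ) (S : Fin (D + 1) → C(Ω, ℝ))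
    (hf : ∀ d, 0 ≤ f d) (hS : ∀ d ω, 0 ≤ S d ω)
    (hS0 : ∀ ω, S 0 ω = 1) (hf0 : f 0 = 1)
    (H : C(Ω, ℝ)) (hH : ∀ ω, 0 ≤ H ω) (h : ℝ) (hh : 0 ≤ h) :
    ArbitrageFree (Fin.snoc f h) (Fin.snoc S H) ↔
      ∃ P : Measure Ω, IsMartingaleMeasure f S P ∧ HasFullSupport P ∧
        Integrable H P ∧ h = ∫ ω, H ω ∂P := by
  classical
  constructor
  · -- hard direction: no arbitrage ⇒ full support martingale measure
    intro hAF
    set Y : Fin (D + 2) → C(Ω, ℝ) := Fin.snoc S H with hYdef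
    set fe : Fin (D + 2) → ℝ := Fin.snoc f h with hfedef
    have hYcast : ∀ d : Fin (D + 1), Y d.castSucc = S d := fun d => Fin.snoc_castSucc _ _ _
    have hYlast : Y (Fin.last (D + 1)) = H := Fin.snoc_last _ _
    have hfecast : ∀ d : Fin (D + 1), fe d.castSucc = f d := fun d => Fin.snoc_castSucc _ _ _
    have hfelast : fe (Fin.last (D + 1)) = h := Fin.snoc_last _ _
    have hzero : (0 : Fin (D + 2)) = (0 : Fin (D + 1)).castSucc := by simp
    have hY0 : ∀ ω, Y 0 ω = 1 := by intro ω; rw [hzero, hYcast]; exact hS0 ω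
    have hfe0 : fe 0 = 1 := by rw [hzero, hfecast]; exact hf0
    have hYnn : ∀ (d : Fin (D + 2)) (ω : Ω), 0 ≤ Y d ω := by
      intro d ω
      refine Fin.lastCases ?_ ?_ d
      · rw [hYlast]; exact hH ω
      · intro i; rw [hYcast]; exact hS i ω
    set Φ : Ω → (Fin (D + 2) → ℝ) := fun ω d => Y d ω with hΦdef
    set sR : Set (Fin (D + 2) → ℝ) := Set.range Φ with hsRdef
    -- Step 1: geometric condition from no-arbitrage
    have hG : ∀ g ∈ closure (convexHull ℝ sR),
        ∃ t : ℝ, 0 < t ∧ fe + t • (fe - g) ∈ convexHull ℝ sR := by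
      by_contra hn
      obtain ⟨ψ, hψ1, y₀, hy₀, hψ2⟩ :=
        sep_aux (Module.finrank ℝ (Fin (D + 2) → ℝ)) (Fin (D + 2) → ℝ) le_rfl sR fe hn
      obtain ⟨ω₀, hω₀⟩ := hy₀
      set π : Fin (D + 2) → ℝ :=
        fun d => ψ (fun j => if d = j then 1 else 0) - (if d = 0 then ψ fe else 0) with hπdef
      have hkey : ∀ v : Fin (D + 2) → ℝ, (∑ d, π d * v d) = ψ v - ψ fe * v 0 := by
        intro v
        have h1 : (∑ d, π d * v d)
            = (∑ d, ψ (fun j => if d = j then 1 else 0) * v d)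
              - ∑ d, (if d = 0 then ψ fe else 0) * v d := by
          rw [← Finset.sum_sub_distrib]
          refine Finset.sum_congr rfl fun d _ => ?_
          rw [hπdef, sub_mul]
        rw [h1]
        congr 1
        · rw [linfun_sum ψ v]
          refine Finset.sum_congr rfl fun d _ => mul_comm _ _
        · simp only [ite_mul, zero_mul]
          rw [Finset.sum_ite_eq' Finset.univ (0 : Fin (D + 2)) (fun d => ψ fe * v d)]
          simp
      apply hAF
      refine ⟨π, ?_, ?_, ?_⟩
      · rw [hkey fe, hfe0, mul_one, sub_self]
      · intro ω
        have h2 : (∑ d, π d * Y d ω) = ψ (Φ ω) - ψ fe := by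
          have := hkey (Φ ω)
          simp only [hΦdef] at this ⊢
          rw [this, hY0 ω, mul_one]
        rw [h2, sub_nonneg]
        exact hψ1 (Φ ω) ⟨ω, rfl⟩
      · refine ⟨ω₀, ?_⟩
        have h2 : (∑ d, π d * Y d ω₀) = ψ (Φ ω₀) - ψ fe := by
          have := hkey (Φ ω₀)
          simp only [hΦdef] at this ⊢
          rw [this, hY0 ω₀, mul_one]
        rw [h2, sub_pos, hω₀]
        exact hψ2
    -- Step 2: the dense-support auxiliary measure weights
    obtain ⟨u, hu⟩ : ∃ u : ℕ → Ω, DenseRange u :=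
      ⟨TopologicalSpace.denseSeq Ω, TopologicalSpace.denseRange_denseSeq Ω⟩
    set r : ℕ → ℝ := fun n => 1 + ∑ d, Y d (u n) with hrdef
    have hr1 : ∀ n, 1 ≤ r n := fun n =>
      le_add_of_nonneg_right (Finset.sum_nonneg fun d _ => hYnn d (u n))
    have hr0 : ∀ n, 0 < r n := fun n => lt_of_lt_of_le one_pos (hr1 n)
    have hrY : ∀ (e : Fin (D + 2)) (n : ℕ), Y e (u n) ≤ r n := by
      intro e n
      have h1 : Y e (u n) ≤ ∑ d, Y d (u n) :=
        Finset.single_le_sum (fun d _ => hYnn d (u n)) (Finset.mem_univ e)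
      have h2 : ∑ d, Y d (u n) ≤ r n := by simp only [hrdef]; linarith
      linarith
    set a : ℕ → ℝ := fun n => (1 / 2 : ℝ) ^ n / r n with hadef
    have ha_pos : ∀ n, 0 < a n := fun n => div_pos (pow_pos one_half_pos n) (hr0 n)
    have hgeom : Summable (fun n : ℕ => (1 / 2 : ℝ) ^ n) :=
      summable_geometric_of_lt_one one_half_pos.le one_half_lt_one
    have ha_sum : Summable a := by
      refine Summable.of_nonneg_of_le (fun n => (ha_pos n).le) (fun n => ?_) hgeom
      exact div_le_self (pow_nonneg one_half_pos.le n) (hr1 n)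
    set A : ℝ := ∑' n, a n with hAdef
    have hA_pos : 0 < A := ha_sum.tsum_pos (fun n => (ha_pos n).le) 0 (ha_pos 0)
    set c : ℕ → ℝ := fun n => a n / A with hcdef
    have hc_pos : ∀ n, 0 < c n := fun n => div_pos (ha_pos n) hA_pos
    have hc_sum : Summable c := ha_sum.div_const A
    have hc_tsum : ∑' n, c n = 1 := by
      simp only [hcdef]
      rw [tsum_div_const, ← hAdef, div_self hA_pos.ne']
    have hcY_le : ∀ (e : Fin (D + 2)) (n : ℕ), c n * Y e (u n) ≤ (1 / 2 : ℝ) ^ n / A := by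
      intro e n
      have h1 : a n * Y e (u n) ≤ (1 / 2 : ℝ) ^ n := by
        simp only [hadef]
        rw [div_mul_eq_mul_div, div_le_iff₀ (hr0 n)]
        exact mul_le_mul_of_nonneg_left (hrY e n) (pow_nonneg one_half_pos.le n)
      have h2 : c n * Y e (u n) = a n * Y e (u n) / A := by simp only [hcdef]; ring
      rw [h2]
      gcongr
    have hcY_sum : ∀ e : Fin (D + 2), Summable fun n => c n * Y e (u n) := fun e =>
      Summable.of_nonneg_of_le (fun n => mul_nonneg (hc_pos n).le (hYnn e (u n)))
        (hcY_le e) (hgeom.div_const A)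
    set g : Fin (D + 2) → ℝ := fun e => ∑' n, c n * Y e (u n) with hgdef
    -- Step 3: g is in the closure of the convex hull
    have hg_mem : g ∈ closure (convexHull ℝ sR) := by
      have h1 : Filter.Tendsto (fun N => ∑ n ∈ Finset.range N, c n) Filter.atTop (𝓝 1) := by
        have := hc_sum.hasSum.tendsto_sum_nat
        rwa [hc_tsum] at this
      have h2 : Filter.Tendsto (fun N => ∑ n ∈ Finset.range N, c n • Φ (u n))
          Filter.atTop (𝓝 g) := by
        rw [tendsto_pi_nhds]
        intro e
        have h3 := (hcY_sum e).hasSum.tendsto_sum_nat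
        simp only [hgdef]
        simp only [Finset.sum_apply, Pi.smul_apply, smul_eq_mul, hΦdef]
        exact h3
      have h4 : Filter.Tendsto (fun N => (∑ n ∈ Finset.range N, c n)⁻¹)
          Filter.atTop (𝓝 1) := by
        have := h1.inv₀ one_ne_zero
        rwa [inv_one] at this
      have h5 := h4.smul h2
      rw [one_smul] at h5
      have htends : Filter.Tendsto (fun N => (Finset.range N).centerMass c (fun n => Φ (u n)))
          Filter.atTop (𝓝 g) := by
        simpa [Finset.centerMass] using h5
      refine mem_closure_of_tendsto htends ?_
      filter_upwards [Filter.eventually_ge_atTop 1] with N hN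
      refine Finset.centerMass_mem_convexHull _ (fun i _ => (hc_pos i).le) ?_ (fun i _ => ⟨u i, rfl⟩)
      refine Finset.sum_pos (fun i _ => hc_pos i) ?_
      rw [Finset.nonempty_range_iff]
      omega
    obtain ⟨τ, hτ, hzC⟩ := hG g hg_mem
    set z : Fin (D + 2) → ℝ := fe + τ • (fe - g) with hzdef
    rw [convexHull_eq] at hzC
    obtain ⟨ι, tfin, w, zf, hw0, hw1, hzs, hcm⟩ := hzC
    have hz_coord : ∀ e, z e = ∑ i ∈ tfin, w i * zf i e := by
      intro e
      rw [← hcm, Finset.centerMass, hw1, inv_one, one_smul, Finset.sum_apply]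
      simp [Pi.smul_apply, smul_eq_mul]
    -- select points realizing the convex combination
    have hζex : ∀ i ∈ tfin, ∃ ω : Ω, Φ ω = zf i := fun i hi => hzs i hi
    set ζ : ι → Ω := fun i => if hi : i ∈ tfin then (hζex i hi).choose
      else Classical.choice ‹Nonempty Ω› with hζdef
    have hζeq : ∀ i ∈ tfin, Φ (ζ i) = zf i := by
      intro i hi
      simp only [hζdef, dif_pos hi]
      exact (hζex i hi).choose_spec
    -- the convex coefficients
    set α : ℝ := 1 / (1 + τ) with hαdef
    set β : ℝ := τ / (1 + τ) with hβdef
    have h1τ : (0 : ℝ) < 1 + τ := by linarith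
    have hα : 0 < α := div_pos one_pos h1τ
    have hβ : 0 < β := div_pos hτ h1τ
    have hαβ : α + β = 1 := by simp only [hαdef, hβdef]; field_simp
    have hcomb : ∀ e, α * z e + β * g e = fe e := by
      intro e
      have hze : z e = fe e + τ * (fe e - g e) := by
        simp [hzdef, Pi.add_apply, Pi.smul_apply, Pi.sub_apply, smul_eq_mul]
      rw [hze]
      simp only [hαdef, hβdef]
      field_simp
      ring
    -- the candidate measure
    set P1 : Measure Ω := ∑ i ∈ tfin, ENNReal.ofReal (α * w i) • Measure.dirac (ζ i) with hP1def
    set P2 : Measure Ω := Measure.sum (fun n => ENNReal.ofReal (β * c n) • Measure.dirac (u n))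
      with hP2def
    have hsum2 : ∀ e : Fin (D + 2), Summable fun n => (β * c n) * Y e (u n) := by
      intro e
      have := (hcY_sum e).mul_left β
      refine this.congr fun n => ?_
      ring
    have hint1 : ∀ e : Fin (D + 2), Integrable (⇑(Y e)) P1 ∧
        ∫ ω, Y e ω ∂P1 = ∑ i ∈ tfin, (α * w i) * Y e (ζ i) := fun e =>
      finsum_dirac_helper (Y e) tfin _ (fun i hi => mul_nonneg hα.le (hw0 i hi)) ζ
    have hint2 : ∀ e : Fin (D + 2), Integrable (⇑(Y e)) P2 ∧
        ∫ ω, Y e ω ∂P2 = ∑' n, (β * c n) * Y e (u n) := fun e =>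
      sum_dirac_helper (Y e) (hYnn e) u _ (fun n => mul_nonneg hβ.le (hc_pos n).le) (hsum2 e)
    have hintP : ∀ e : Fin (D + 2), Integrable (⇑(Y e)) (P1 + P2) := fun e =>
      (integrable_add_measure).2 ⟨(hint1 e).1, (hint2 e).1⟩
    have hintegral : ∀ e : Fin (D + 2), ∫ ω, Y e ω ∂(P1 + P2) = fe e := by
      intro e
      rw [integral_add_measure (hint1 e).1 (hint2 e).1, (hint1 e).2, (hint2 e).2]
      have h1 : ∑ i ∈ tfin, (α * w i) * Y e (ζ i) = α * z e := by
        rw [hz_coord e, Finset.mul_sum]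
        refine Finset.sum_congr rfl fun i hi => ?_
        rw [← hζeq i hi]
        simp only [hΦdef]
        ring
      have h2 : ∑' n, (β * c n) * Y e (u n) = β * g e := by
        have h3 : ∀ n, (β * c n) * Y e (u n) = β * (c n * Y e (u n)) := fun n => by ring
        rw [tsum_congr h3, tsum_mul_left]
      rw [h1, h2, hcomb e]
    have hP1univ : P1 Set.univ = ENNReal.ofReal α := by
      rw [hP1def, Measure.finset_sum_apply]
      have : ∀ i ∈ tfin, (ENNReal.ofReal (α * w i) • Measure.dirac (ζ i)) Set.univ
          = ENNReal.ofReal (α * w i) := by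
        intro i hi
        rw [Measure.smul_apply, measure_univ, smul_eq_mul, mul_one]
      rw [Finset.sum_congr rfl this, ← ENNReal.ofReal_sum_of_nonneg
        (fun i hi => mul_nonneg hα.le (hw0 i hi)), ← Finset.mul_sum, hw1, mul_one]
    have hP2univ : P2 Set.univ = ENNReal.ofReal β := by
      rw [hP2def, Measure.sum_apply _ MeasurableSet.univ]
      have : ∀ n, (ENNReal.ofReal (β * c n) • Measure.dirac (u n)) Set.univ
          = ENNReal.ofReal (β * c n) := by
        intro n
        rw [Measure.smul_apply, measure_univ, smul_eq_mul, mul_one]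
      rw [tsum_congr this, ← ENNReal.ofReal_tsum_of_nonneg
        (fun n => mul_nonneg hβ.le (hc_pos n).le) (hc_sum.mul_left β), tsum_mul_left,
        hc_tsum, mul_one]
    have hprob : IsProbabilityMeasure (P1 + P2) := by
      constructor
      rw [Measure.add_apply, hP1univ, hP2univ, ← ENNReal.ofReal_add hα.le hβ.le, hαβ,
        ENNReal.ofReal_one]
    refine ⟨P1 + P2, ⟨hprob, fun d => ?_⟩, ?_, ?_, ?_⟩
    · constructor
      · have := hintP d.castSucc
        rwa [hYcast d] at this
      · have := hintegral d.castSucc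
        rwa [hYcast d, hfecast d] at this
    · intro U hU hUne
      obtain ⟨n, hn⟩ := hu.exists_mem_open hU hUne
      have h2 : ENNReal.ofReal (β * c n) ≤ (P1 + P2) U := by
        have h3 : (ENNReal.ofReal (β * c n) • Measure.dirac (u n)) U = ENNReal.ofReal (β * c n) := by
          rw [Measure.smul_apply, Measure.dirac_apply' _ hU.measurableSet,
            Set.indicator_of_mem hn]
          simp
        calc ENNReal.ofReal (β * c n)
            = (ENNReal.ofReal (β * c n) • Measure.dirac (u n)) U := h3.symm
          _ ≤ P2 U := Measure.le_iff'.1 (Measure.le_sum _ n) U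
          _ ≤ (P1 + P2) U := by rw [Measure.add_apply]; exact le_add_self
      refine lt_of_lt_of_le ?_ h2
      exact ENNReal.ofReal_pos.2 (mul_pos hβ (hc_pos n))
    · have := hintP (Fin.last (D + 1))
      rwa [hYlast] at this
    · have := hintegral (Fin.last (D + 1))
      rw [hYlast, hfelast] at this
      exact this.symm
  · -- easy direction
    rintro ⟨P, ⟨hPprob, hPmart⟩, hPfull, hHint, hhval⟩
    haveI := hPprob
    rintro ⟨π, hcost, hpayoff, ω₀, hω₀⟩
    set Y : Fin (D + 2) → C(Ω, ℝ) := Fin.snoc S H with hYdef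
    set fe : Fin (D + 2) → ℝ := Fin.snoc f h with hfedef
    have hYint : ∀ d : Fin (D + 2), Integrable (⇑(Y d)) P := by
      intro d
      refine Fin.lastCases ?_ ?_ d
      · have h1 : Y (Fin.last (D + 1)) = H := Fin.snoc_last _ _
        rw [h1]
        exact hHint
      · intro i
        have h1 : Y i.castSucc = S i := Fin.snoc_castSucc _ _ _
        rw [h1]
        exact (hPmart i).1
    have hYval : ∀ d : Fin (D + 2), ∫ ω, Y d ω ∂P = fe d := by
      intro d
      refine Fin.lastCases ?_ ?_ d
      · have h1 : Y (Fin.last (D + 1)) = H := Fin.snoc_last _ _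
        have h2 : fe (Fin.last (D + 1)) = h := Fin.snoc_last _ _
        rw [h1, h2]
        exact hhval.symm
      · intro i
        have h1 : Y i.castSucc = S i := Fin.snoc_castSucc _ _ _
        have h2 : fe i.castSucc = f i := Fin.snoc_castSucc _ _ _
        rw [h1, h2]
        exact (hPmart i).2
    set g0 : Ω → ℝ := fun ω => ∑ d, π d * Y d ω with hg0def
    have hg0cont : Continuous g0 := by
      apply continuous_finset_sum
      exact fun d _ => continuous_const.mul (Y d).continuous
    have hg0int : Integrable g0 P :=
      integrable_finset_sum _ fun d _ => ((hYint d).const_mul (π d))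
    have hg0val : ∫ ω, g0 ω ∂P = ∑ d, π d * fe d := by
      simp only [hg0def]
      rw [integral_finset_sum _ (fun d _ => ((hYint d).const_mul (π d)))]
      refine Finset.sum_congr rfl fun d _ => ?_
      rw [integral_const_mul, hYval d]
    have hg0nonneg : ∀ ω, 0 ≤ g0 ω := hpayoff
    have hpos : 0 < g0 ω₀ := hω₀
    set U : Set Ω := g0 ⁻¹' Set.Ioi (g0 ω₀ / 2) with hUdef
    have hUopen : IsOpen U := isOpen_Ioi.preimage hg0cont
    have hUne : U.Nonempty := ⟨ω₀, by simp only [hUdef, Set.mem_preimage, Set.mem_Ioi]; linarith⟩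
    have hPU : 0 < P U := hPfull U hUopen hUne
    have h1 : g0 ω₀ / 2 * (P U).toReal ≤ ∫ ω in U, g0 ω ∂P :=
      by
        have := setIntegral_ge_of_const_le hUopen.measurableSet (measure_ne_top P U)
          (fun x hx => le_of_lt hx) hg0int.integrableOn
        rw [smul_eq_mul, measureReal_def, mul_comm] at this
        exact this
    have h2 : ∫ ω in U, g0 ω ∂P ≤ ∫ ω, g0 ω ∂P :=
      setIntegral_le_integral hg0int (Filter.Eventually.of_forall hg0nonneg)
    have h3 : 0 < (P U).toReal := ENNReal.toReal_pos hPU.ne' (measure_ne_top P U)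
    have h4 : 0 < ∫ ω, g0 ω ∂P := lt_of_lt_of_le (by positivity) (h1.trans h2)
    rw [hg0val] at h4
    linarith
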